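/- arXiv:1409.5462 — 6 statements merged into one kernel-verified Lean document; each statement's English description precedes it below -/
import Mathlib

section
/- Let K be a field, F ∈ K[x]^{m×n}, and U = [U_L, U_R] ∈ K[x]^{n×n} a unimodular matrix such that F·U = [0, T] with T of full column rank, F·U_L = 0 and F·U_R = T. If N is any other kernel basis of F, then the matrix U* = [N, U_R] is unimodular and also satisfies F·U* = [0, T]. -/
open Polynomial Matrix

private lemma mulVec_eq_sum_cols {R : Type*} [CommRing R] {n k : ℕ}
    (M : Matrix (Fin n) (Fin k) R) (v : Fin k → R) :
    M.mulVec v = ∑ i, v i • Mᵀ i := by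
  funext j
  simp [Matrix.mulVec, dotProduct, Finset.sum_apply, mul_comm]

private lemma mulVec_eq_zero_of_li {R : Type*} [CommRing R] {n k : ℕ}
    {M : Matrix (Fin n) (Fin k) R} (h : LinearIndependent R Mᵀ)
    {v : Fin k → R} (hv : M.mulVec v = 0) : v = 0 := by
  rw [mulVec_eq_sum_cols] at hv
  funext i
  exact Fintype.linearIndependent_iff.mp h v hv i

/-- `N` is a (right) kernel basis of `F`. -/
def IsKernelBasis {K : Type*} [Field K] {m n k : ℕ}
    (F : Matrix (Fin m) (Fin n) K[X]) (N : Matrix (Fin n) (Fin k) K[X]) : Prop :=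
  LinearIndependent K[X] Nᵀ ∧
  F * N = 0 ∧
  ∀ q : Fin n → K[X], F.mulVec q = 0 → ∃ p : Fin k → K[X], q = N.mulVec p

/-- Let `U = [U_L, U_R]` be unimodular with `F * U = [0, T]`,
`T` of full column rank (so `F * U_L = 0`, `F * U_R = T`, `U_L` being the first
`p` columns of `U` and `U_R` the last `r`). If `N` is any other kernel basis of
`F` (with, necessarily, `k = p` columns), then `U* = [N, U_R]` is unimodular and
also satisfies `F * U* = [0, T]`. -/
theorem replace_kernel_basis_in_unimodular_transformation
    {K : Type*} [Field K] {m p r k : ℕ}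
    (F : Matrix (Fin m) (Fin (p + r)) K[X])
    (U : Matrix (Fin (p + r)) (Fin (p + r)) K[X])
    (hU : ∃ c : K, c ≠ 0 ∧ U.det = Polynomial.C c)
    (T : Matrix (Fin m) (Fin r) K[X])
    (hT : LinearIndependent K[X] Tᵀ)
    (hL : F * U.submatrix id (Fin.castAdd r) = 0)
    (hR : F * U.submatrix id (Fin.natAdd p) = T)
    (N : Matrix (Fin (p + r)) (Fin k) K[X])
    (hN : IsKernelBasis F N) :
    ∃ h : k = p,
      -- `U* = [N, U_R]`, written as a `(p+r) × (p+r)` matrix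
      ∀ Ustar : Matrix (Fin (p + r)) (Fin (p + r)) K[X],
        Ustar = (Matrix.fromCols (N.submatrix id (Fin.cast h.symm))
            (U.submatrix id (Fin.natAdd p))).submatrix id finSumFinEquiv.symm →
        (∃ c : K, c ≠ 0 ∧ Ustar.det = Polynomial.C c) ∧
        F * Ustar.submatrix id (Fin.castAdd r) = 0 ∧
        F * Ustar.submatrix id (Fin.natAdd p) = T := by
  obtain ⟨c, hc, hdet⟩ := hU
  obtain ⟨hNli, hFN, hNspan⟩ := hN
  set UL := U.submatrix id (Fin.castAdd r) with hULdef
  set UR := U.submatrix id (Fin.natAdd p) with hURdef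
  have hdetne : U.det ≠ 0 := by
    rw [hdet]; exact fun h => hc (by simpa using congrArg (fun q => q.coeff 0) h)
  -- columns of U are linearly independent
  have hUli : LinearIndependent K[X] Uᵀ := by
    refine Fintype.linearIndependent_iff.mpr ?_
    intro g hg
    have : U.mulVec g = 0 := by rw [mulVec_eq_sum_cols]; exact hg
    have := Matrix.eq_zero_of_mulVec_eq_zero hdetne this
    exact fun i => congrFun this i
  have hULt : ULᵀ = Uᵀ ∘ Fin.castAdd r := by
    funext i j; rfl
  have hULli : LinearIndependent K[X] ULᵀ := by
    rw [hULt]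
    exact hUli.comp _ (fun a b hab => Fin.castAdd_injective _ r hab)
  -- UL spans the kernel
  have hULspan : ∀ q : Fin (p + r) → K[X], F.mulVec q = 0 →
      ∃ w : Fin p → K[X], q = UL.mulVec w := by
    intro q hq
    set V : Matrix (Fin (p + r)) (Fin (p + r)) K[X] := C c⁻¹ • U.adjugate with hV
    have hUV : U * V = 1 := by
      rw [hV, Matrix.mul_smul, Matrix.mul_adjugate, hdet, smul_smul, ← C_mul,
        inv_mul_cancel₀ hc, Polynomial.C_1, one_smul]
    set w : Fin (p + r) → K[X] := V.mulVec q with hw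
    have hqw : q = U.mulVec w := by
      rw [hw, Matrix.mulVec_mulVec, hUV, Matrix.one_mulVec]
    have hFUw : (F * U).mulVec w = 0 := by
      rw [← Matrix.mulVec_mulVec, ← hqw, hq]
    -- the right part of w vanishes
    have hTw : T.mulVec (w ∘ Fin.natAdd p) = 0 := by
      funext i
      have h0 : (0 : K[X]) = ∑ l, (F * U) i l * w l := by
        have := congrFun hFUw i
        simpa [Matrix.mulVec, dotProduct] using this.symm
      rw [Fin.sum_univ_add (fun l => (F * U) i l * w l)] at h0
      have hzero : ∀ a : Fin p, (F * U) i (Fin.castAdd r a) = 0 := by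
        intro a
        have : (F * UL) i a = 0 := by rw [hL]; rfl
        rw [← this]
        simp [hULdef, Matrix.mul_apply]
      have hTpart : ∀ b : Fin r, (F * U) i (Fin.natAdd p b) = T i b := by
        intro b
        have : (F * UR) i b = T i b := by rw [hR]
        rw [← this]
        simp [hURdef, Matrix.mul_apply]
      simp only [hzero, zero_mul, Finset.sum_const_zero, zero_add] at h0
      simp only [hTpart] at h0
      simp [Matrix.mulVec, dotProduct]
      exact h0.symm
    have hwR : (w ∘ Fin.natAdd p) = 0 := mulVec_eq_zero_of_li hT hTw
    refine ⟨w ∘ Fin.castAdd r, ?_⟩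
    funext j
    rw [hqw]
    show (∑ l, U j l * w l) = ∑ a, UL j a * (w ∘ Fin.castAdd r) a
    rw [Fin.sum_univ_add (fun l => U j l * w l)]
    have : ∀ b : Fin r, w (Fin.natAdd p b) = 0 := fun b => congrFun hwR b
    simp only [this, mul_zero, Finset.sum_const_zero, add_zero]
    rfl
  -- spans of columns of N and of UL agree
  have hspan_eq : Submodule.span K[X] (Set.range Nᵀ) =
      Submodule.span K[X] (Set.range ULᵀ) := by
    apply le_antisymm
    · rw [Submodule.span_le]
      rintro _ ⟨i, rfl⟩
      have hqi : F.mulVec (Nᵀ i) = 0 := by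
        funext j
        have : (F * N) j i = 0 := by rw [hFN]; rfl
        simp only [Matrix.mul_apply] at this
        simpa [Matrix.mulVec, dotProduct] using this
      obtain ⟨w, hw⟩ := hULspan _ hqi
      rw [hw, mulVec_eq_sum_cols]
      exact Submodule.sum_mem _ fun a _ =>
        Submodule.smul_mem _ _ (Submodule.subset_span ⟨a, rfl⟩)
    · rw [Submodule.span_le]
      rintro _ ⟨i, rfl⟩
      have hqi : F.mulVec (ULᵀ i) = 0 := by
        funext j
        have : (F * UL) j i = 0 := by rw [hL]; rfl
        simp only [Matrix.mul_apply] at this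
        simpa [Matrix.mulVec, dotProduct] using this
      obtain ⟨w, hw⟩ := hNspan _ hqi
      rw [hw, mulVec_eq_sum_cols]
      exact Submodule.sum_mem _ fun a _ =>
        Submodule.smul_mem _ _ (Submodule.subset_span ⟨a, rfl⟩)
  -- deduce k = p
  have hkp : k = p := by
    have b1 := Module.Basis.span hNli
    have b2 := Module.Basis.span hULli
    have e1 : (Submodule.span K[X] (Set.range Nᵀ)) ≃ₗ[K[X]]
        (Submodule.span K[X] (Set.range ULᵀ)) := LinearEquiv.ofEq _ _ hspan_eq
    have := mk_eq_mk_of_basis' (b1.map e1) b2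
    simpa using this
  refine ⟨hkp, ?_⟩
  subst hkp
  intro Ustar hstar
  have hNsub : N.submatrix id (Fin.cast (Eq.refl k).symm) = N := by
    funext i j; rfl
  rw [hNsub] at hstar
  -- build A with UL * A = N and B with N * B = UL
  have hexA : ∀ j : Fin k, ∃ w : Fin k → K[X], Nᵀ j = UL.mulVec w := by
    intro j
    apply hULspan
    funext i
    have : (F * N) i j = 0 := by rw [hFN]; rfl
    simp only [Matrix.mul_apply] at this
    simpa [Matrix.mulVec, dotProduct] using this
  have hexB : ∀ j : Fin k, ∃ w : Fin k → K[X], ULᵀ j = N.mulVec w := by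
    intro j
    apply hNspan
    funext i
    have : (F * UL) i j = 0 := by rw [hL]; rfl
    simp only [Matrix.mul_apply] at this
    simpa [Matrix.mulVec, dotProduct] using this
  choose wA hwA using hexA
  choose wB hwB using hexB
  set A : Matrix (Fin k) (Fin k) K[X] := Matrix.of fun i j => wA j i with hA
  set B : Matrix (Fin k) (Fin k) K[X] := Matrix.of fun i j => wB j i with hB
  have hULA : UL * A = N := by
    funext s j
    have := congrFun (hwA j) s
    simpa [Matrix.mul_apply, Matrix.mulVec, dotProduct, hA] using this.symm
  have hNB : N * B = UL := by
    funext s j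
    have := congrFun (hwB j) s
    simpa [Matrix.mul_apply, Matrix.mulVec, dotProduct, hB] using this.symm
  have hAB : A * B = 1 := by
    have h1 : UL * (A * B) = UL := by
      rw [← Matrix.mul_assoc, hULA, hNB]
    funext i j
    have hcol : UL.mulVec (fun l => (A * B) l j - (1 : Matrix _ _ K[X]) l j) = 0 := by
      funext s
      have := congrFun (congrFun h1 s) j
      simp only [Matrix.mul_apply] at this
      simp only [Matrix.mulVec, dotProduct, mul_sub, Finset.sum_sub_distrib,
        Matrix.one_apply, mul_ite, mul_one, mul_zero, Finset.sum_ite_eq',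
        Finset.mem_univ, if_true, sub_eq_zero, Pi.zero_apply]
      exact this
    have := congrFun (mulVec_eq_zero_of_li hULli hcol) i
    simpa [sub_eq_zero] using this
  have hdetA : ∃ a : K, a ≠ 0 ∧ A.det = C a := by
    have : A.det * B.det = 1 := by rw [← Matrix.det_mul, hAB, Matrix.det_one]
    obtain ⟨a, ha, haC⟩ := Polynomial.isUnit_iff.mp (IsUnit.of_mul_eq_one _ this)
    exact ⟨a, ha.ne_zero, haC.symm⟩
  obtain ⟨a, ha, haC⟩ := hdetA
  -- identify Ustar with U * W
  set e : Fin k ⊕ Fin r ≃ Fin (k + r) := finSumFinEquiv with he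
  set Bk : Matrix (Fin k ⊕ Fin r) (Fin k ⊕ Fin r) K[X] :=
    Matrix.fromBlocks A 0 0 1 with hBk
  have hU' : U.submatrix id ⇑e = Matrix.fromCols UL UR := by
    funext i j
    cases j with
    | inl j => simp [he, hULdef, Matrix.fromCols]
    | inr j => simp [he, hURdef, Matrix.fromCols]
  have hUstar2 : Ustar = (U.submatrix id ⇑e * Bk).submatrix id ⇑e.symm := by
    rw [hU', hBk, Matrix.fromCols_mul_fromBlocks, hstar]
    simp [hULA]
  have hUrw : (U.submatrix id ⇑e).submatrix id ⇑e.symm = U := by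
    funext i j; simp
  have hUstarU : Ustar = U * Bk.submatrix ⇑e.symm ⇑e.symm := by
    rw [hUstar2, ← Matrix.submatrix_mul_equiv (U.submatrix id ⇑e) Bk id e.symm ⇑e.symm, hUrw]
  refine ⟨⟨c * a, mul_ne_zero hc ha, ?_⟩, ?_, ?_⟩
  · rw [hUstarU, Matrix.det_mul, Matrix.det_submatrix_equiv_self, hBk,
      Matrix.det_fromBlocks_zero₂₁, Matrix.det_one, mul_one, hdet, haC, ← C_mul]
  · have : Ustar.submatrix id (Fin.castAdd r) = N := by
      funext i j
      rw [hstar]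
      simp [he, Matrix.fromCols, finSumFinEquiv_symm_apply_castAdd]
    rw [this, hFN]
  · have : Ustar.submatrix id (Fin.natAdd k) = UR := by
      funext i j
      rw [hstar]
      simp [he, Matrix.fromCols, finSumFinEquiv_symm_apply_natAdd]
    rw [this, hURdef, hR]
end

section
/- Let K be a field and F ∈ K[x]^{n×n} nonsingular, partitioned as F = [F_U; F_D] with F_U the top k rows and F_D the bottom n−k rows. Suppose G_1 ∈ K[x]^{k×k} is a column basis of F_U and N ∈ K[x]^{n×(n−k)} is a kernel basis of F_U. Then there exists a unimodular matrix U ∈ K[x]^{n×n} whose last n−k columns equal N such that F·U = [[G_1, 0], [*, G_2]] is block lower triangular with diagonal blocks G_1 and G_2 = F_D·N; moreover G_1 and G_2 are square and nonsingular. -/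
open Polynomial Matrix

/-- `T` is a column basis of `F`. -/
def IsColumnBasis {K : Type*} [Field K] {m n r : ℕ}
    (F : Matrix (Fin m) (Fin n) K[X]) (T : Matrix (Fin m) (Fin r) K[X]) : Prop :=
  LinearIndependent K[X] Tᵀ ∧
  (∀ q : Fin r → K[X], ∃ p : Fin n → K[X], T.mulVec q = F.mulVec p) ∧
  (∀ p : Fin n → K[X], ∃ q : Fin r → K[X], F.mulVec p = T.mulVec q)

/-- Let `F` be nonsingular of size `(k+l) × (k+l)`, partitioned as
`F = [F_U; F_D]` with `F_U` the top `k` rows and `F_D` the bottom `l` rows.  If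
`G₁` is a (square) column basis of `F_U` and `N` a kernel basis of `F_U`, then
there is a unimodular `U` whose last `l` columns equal `N` such that `F * U` is
block lower triangular with diagonal blocks `G₁` and `G₂ = F_D * N`; moreover
`G₁` and `G₂` are (square and) nonsingular. -/
theorem exists_unimodular_block_triangularization
    {K : Type*} [Field K] {k l : ℕ}
    (F : Matrix (Fin (k + l)) (Fin (k + l)) K[X]) (hF : F.det ≠ 0)
    (G1 : Matrix (Fin k) (Fin k) K[X])
    (hG1 : IsColumnBasis (F.submatrix (Fin.castAdd l) id) G1)
    (N : Matrix (Fin (k + l)) (Fin l) K[X])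
    (hN : IsKernelBasis (F.submatrix (Fin.castAdd l) id) N) :
    ∃ U : Matrix (Fin (k + l)) (Fin (k + l)) K[X],
      (∃ c : K, c ≠ 0 ∧ U.det = Polynomial.C c) ∧
      U.submatrix id (Fin.natAdd k) = N ∧
      (F * U).submatrix (Fin.castAdd l) (Fin.castAdd l) = G1 ∧
      (F * U).submatrix (Fin.castAdd l) (Fin.natAdd k) = 0 ∧
      (F * U).submatrix (Fin.natAdd k) (Fin.natAdd k) =
        F.submatrix (Fin.natAdd k) id * N ∧
      G1.det ≠ 0 ∧ (F.submatrix (Fin.natAdd k) id * N).det ≠ 0 := by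
  classical
  obtain ⟨-, hFUN, hker⟩ := hN
  obtain ⟨-, hG1col, hG1gen⟩ := hG1
  set FU : Matrix (Fin k) (Fin (k + l)) K[X] := F.submatrix (Fin.castAdd l) id with hFUdef
  choose pcol hpcol using hG1col
  choose qcol hqcol using hG1gen
  set P : Matrix (Fin (k + l)) (Fin k) K[X] := fun i j => pcol (Pi.single j 1) i with hP
  set Q : Matrix (Fin k) (Fin (k + l)) K[X] := fun i j => qcol (Pi.single j 1) i with hQ
  have hFUP : FU * P = G1 := by
    apply Matrix.ext; intro i j
    have h := congrFun (hpcol (Pi.single j 1)) i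
    simp only [Matrix.mulVec, dotProduct, Pi.single_apply, mul_ite, mul_one, mul_zero,
      Finset.sum_ite_eq', Finset.mem_univ, if_true] at h
    rw [Matrix.mul_apply, ← h]
  have hG1Q : G1 * Q = FU := by
    apply Matrix.ext; intro i j
    have h := congrFun (hqcol (Pi.single j 1)) i
    simp only [Matrix.mulVec, dotProduct, Pi.single_apply, mul_ite, mul_one, mul_zero,
      Finset.sum_ite_eq', Finset.mem_univ, if_true] at h
    rw [Matrix.mul_apply, h]
  set D : Matrix (Fin (k + l)) (Fin (k + l)) K[X] := P * Q - 1 with hD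
  have hPQker : ∀ j, FU.mulVec (fun t => D t j) = 0 := by
    intro j
    have h : FU * D = 0 := by
      rw [hD, Matrix.mul_sub, ← Matrix.mul_assoc, hFUP, hG1Q, Matrix.mul_one, sub_self]
    funext i
    have := congrFun (congrFun h i) j
    simpa [Matrix.mulVec, dotProduct, Matrix.mul_apply] using this
  choose rcol hrcol using fun j => hker _ (hPQker j)
  set R : Matrix (Fin l) (Fin (k + l)) K[X] := fun t j => rcol j t with hR
  have hNR : N * R = P * Q - 1 := by
    apply Matrix.ext; intro i j
    have h := congrFun (hrcol j) i
    simp only [Matrix.mulVec, dotProduct] at h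
    rw [Matrix.mul_apply, ← hD, ← h]
  set U : Matrix (Fin (k + l)) (Fin (k + l)) K[X] :=
    fun i j => Fin.addCases (fun j₁ => P i j₁) (fun j₂ => N i j₂) j with hU
  set W : Matrix (Fin (k + l)) (Fin (k + l)) K[X] :=
    fun i j => Fin.addCases (fun i₁ => Q i₁ j) (fun i₂ => -R i₂ j) i with hW
  have hUW : U * W = 1 := by
    apply Matrix.ext; intro i j
    rw [Matrix.mul_apply, Fin.sum_univ_add]
    simp only [hU, hW, Fin.addCases_left, Fin.addCases_right, mul_neg]
    have h1 : ∑ t, P i t * Q t j = (P * Q) i j := (Matrix.mul_apply).symm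
    have h2 : ∑ t, N i t * R t j = (N * R) i j := (Matrix.mul_apply).symm
    rw [Finset.sum_neg_distrib, h1, h2, hNR]
    simp
  have hUdet : IsUnit U.det := by
    apply IsUnit.of_mul_eq_one W.det
    rw [← Matrix.det_mul, hUW, Matrix.det_one]
  obtain ⟨c, hc, hcd⟩ := Polynomial.isUnit_iff.mp hUdet
  have hUN : U.submatrix id (Fin.natAdd k) = N := by
    apply Matrix.ext; intro i j; show U (id i) (Fin.natAdd k j) = N i j; simp [hU, Fin.addCases_right]
  have h1 : (F * U).submatrix (Fin.castAdd l) (Fin.castAdd l) = G1 := by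
    apply Matrix.ext; intro i j
    simp only [Matrix.submatrix_apply, Matrix.mul_apply, id]
    have hc' : ∀ t, U t (Fin.castAdd l j) = P t j := fun t => by simp [hU]
    simp_rw [hc']
    have := congrFun (congrFun hFUP i) j
    simpa [Matrix.mul_apply, hFUdef] using this
  have h2 : (F * U).submatrix (Fin.castAdd l) (Fin.natAdd k) = 0 := by
    apply Matrix.ext; intro i j
    simp only [Matrix.submatrix_apply, Matrix.mul_apply, id]
    have hc' : ∀ t, U t (Fin.natAdd k j) = N t j := fun t => by simp [hU]
    simp_rw [hc']
    have := congrFun (congrFun hFUN i) j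
    simpa [Matrix.mul_apply, hFUdef] using this
  have h3 : (F * U).submatrix (Fin.natAdd k) (Fin.natAdd k) =
      F.submatrix (Fin.natAdd k) id * N := by
    apply Matrix.ext; intro i j
    simp only [Matrix.submatrix_apply, Matrix.mul_apply, id]
    have hc' : ∀ t, U t (Fin.natAdd k j) = N t j := fun t => by simp [hU]
    simp_rw [hc']
  have hB : (F * U).submatrix finSumFinEquiv finSumFinEquiv =
      Matrix.fromBlocks G1 0
        ((F * U).submatrix (Fin.natAdd k) (Fin.castAdd l))
        (F.submatrix (Fin.natAdd k) id * N) := by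
    apply Matrix.ext; intro i j
    rcases i with i | i <;> rcases j with j | j
    · simpa using congrFun (congrFun h1 i) j
    · simpa using congrFun (congrFun h2 i) j
    · simp
    · simpa using congrFun (congrFun h3 i) j
  have hdetblock : (F * U).det =
      G1.det * (F.submatrix (Fin.natAdd k) id * N).det := by
    rw [← Matrix.det_submatrix_equiv_self finSumFinEquiv (F * U), hB,
      Matrix.det_fromBlocks_zero₁₂]
  have hFU : (F * U).det ≠ 0 := by
    rw [Matrix.det_mul, ← hcd]
    exact mul_ne_zero hF (by simpa using hc.ne_zero)
  rw [hdetblock] at hFU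
  exact ⟨U, ⟨c, hc.ne_zero, hcd.symm⟩, hUN, h1, h2, h3,
    left_ne_zero_of_mul hFU, right_ne_zero_of_mul hFU⟩
end

section
/- Let K be a field, F ∈ K[x]^{n×n} nonsingular with column degrees s = (s_1,...,s_n), partitioned as F = [F_U; F_D] with F_U the top k rows. Let N be an s-minimal kernel basis of F_U and set G_2 = F_D·N. Then the sum of the column degrees of G_2 is at most s_1 + ... + s_n. -/
set_option maxHeartbeats 1000000
set_option synthInstance.maxHeartbeats 400000

open Polynomial Matrix

/-- The column degree of a column vector `v`: the maximum of the degrees of its entries. -/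
def colDeg {K : Type*} [Field K] {m : ℕ} (v : Fin m → K[X]) : WithBot ℕ :=
  Finset.univ.sup fun i => (v i).degree

/-- The `s`-shifted column degree of a column vector `v`: `max_i (deg (v i) + s i)`. -/
def sColDeg {K : Type*} [Field K] {n : ℕ} (s : Fin n → ℕ) (v : Fin n → K[X]) : WithBot ℕ :=
  Finset.univ.sup fun i => (v i).degree + (s i : WithBot ℕ)

/-- The `s`-shifted leading coefficient matrix of `N`. -/
def sLeadingCoeffMatrix {K : Type*} [Field K] {n k : ℕ} (s : Fin n → ℕ)
    (N : Matrix (Fin n) (Fin k) K[X]) : Matrix (Fin n) (Fin k) K :=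
  fun i j =>
    if (N i j).degree + (s i : WithBot ℕ) = sColDeg s (Nᵀ j) then (N i j).leadingCoeff else 0

/-- `N` is `s`-column reduced: its `s`-shifted leading coefficient matrix has
full column rank over `K`. -/
def IsSColumnReduced {K : Type*} [Field K] {n k : ℕ} (s : Fin n → ℕ)
    (N : Matrix (Fin n) (Fin k) K[X]) : Prop :=
  LinearIndependent K (sLeadingCoeffMatrix s N)ᵀ

section Helpers

variable {K : Type*} [Field K]

/-- coefficient of a product at the sum of degree bounds. -/
lemma coeff_prod_deg {ι : Type*} (S : Finset ι) (p : ι → K[X]) (d : ι → ℕ)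
    (h : ∀ i ∈ S, (p i).degree ≤ (d i : WithBot ℕ)) :
    (∏ i ∈ S, p i).coeff (∑ i ∈ S, d i) = ∏ i ∈ S, (p i).coeff (d i) := by
  classical
  induction S using Finset.cons_induction with
  | empty => simp
  | cons a S ha ih =>
    rw [Finset.prod_cons, Finset.sum_cons, Finset.prod_cons]
    have h1 : (p a).natDegree ≤ d a :=
      natDegree_le_iff_degree_le.2 (h a (Finset.mem_cons_self a S))
    have h2 : (∏ i ∈ S, p i).natDegree ≤ ∑ i ∈ S, d i := by
      refine natDegree_le_iff_degree_le.2 ((degree_prod_le _ _).trans ?_)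
      rw [Nat.cast_sum]
      exact Finset.sum_le_sum fun i hi => h i (Finset.mem_cons_of_mem hi)
    rw [coeff_mul_add_eq_of_natDegree_le h1 h2, ih fun i hi => h i (Finset.mem_cons_of_mem hi)]

lemma exists_perm_prod_ne_zero {n : ℕ} {R : Type*} [CommRing R] {M : Matrix (Fin n) (Fin n) R}
    (h : M.det ≠ 0) : ∃ σ : Equiv.Perm (Fin n), ∀ i, M (σ i) i ≠ 0 := by
  by_contra hc
  push_neg at hc
  apply h
  rw [Matrix.det_apply']
  refine Finset.sum_eq_zero fun σ _ => ?_
  obtain ⟨i, hi⟩ := hc σ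
  have hz : ∏ i, M (σ i) i = 0 := Finset.prod_eq_zero (Finset.mem_univ i) hi
  rw [hz, mul_zero]

lemma degree_det_le_sum {n : ℕ} (M : Matrix (Fin n) (Fin n) K[X]) (d : Fin n → WithBot ℕ)
    (h : ∀ i j, (M i j).degree ≤ d j) : M.det.degree ≤ ∑ j, d j := by
  rw [Matrix.det_apply']
  refine (degree_sum_le _ _).trans (Finset.sup_le fun σ _ => ?_)
  refine (degree_mul_le _ _).trans ?_
  have h1 : (((Equiv.Perm.sign σ : ℤ) : K[X])).degree ≤ 0 := degree_intCast_le _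
  have h2 : (∏ i, M (σ i) i).degree ≤ ∑ j, d j :=
    (degree_prod_le _ _).trans (Finset.sum_le_sum fun i _ => h (σ i) i)
  calc ((Equiv.Perm.sign σ : ℤ) : K[X]).degree + (∏ i, M (σ i) i).degree
      ≤ 0 + ∑ j, d j := add_le_add h1 h2
    _ = ∑ j, d j := zero_add _

lemma withbot_le_sub {a : WithBot ℕ} {b c : ℕ} (h : a + (c : WithBot ℕ) ≤ (b : WithBot ℕ)) :
    a ≤ ((b - c : ℕ) : WithBot ℕ) := by
  cases a with
  | bot => exact bot_le
  | coe m =>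
    simp only [Nat.cast_withBot] at h ⊢
    rw [← WithBot.coe_add, WithBot.coe_le_coe] at h
    exact WithBot.coe_le_coe.2 (by omega)

/-- Workhorse: degree and nonvanishing of a determinant from its shifted leading
coefficient matrix. -/
lemma det_shift_degree {n : ℕ} (M : Matrix (Fin n) (Fin n) K[X]) (w t : Fin n → ℕ)
    (h : ∀ i j, (M i j).degree + (w i : WithBot ℕ) ≤ (t j : WithBot ℕ))
    (L : Matrix (Fin n) (Fin n) K)
    (hL : ∀ i j, L i j = (M i j).coeff (t j - w i))
    (hdet : L.det ≠ 0) :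
    (∑ i, w i ≤ ∑ j, t j) ∧ M.det ≠ 0 ∧
      M.det.degree = ((∑ j, t j - ∑ i, w i : ℕ) : WithBot ℕ) := by
  classical
  have hzero : ∀ i j, t j < w i → M i j = 0 := by
    intro i j hij
    by_contra hne
    have hd := h i j
    rw [degree_eq_natDegree hne] at hd
    have : (((M i j).natDegree + w i : ℕ) : WithBot ℕ) ≤ ((t j : ℕ) : WithBot ℕ) := by
      rw [Nat.cast_add]; exact hd
    have := (Nat.cast_le (α := WithBot ℕ)).1 this
    omega
  have hdegle : ∀ i j, (M i j).degree ≤ ((t j - w i : ℕ) : WithBot ℕ) :=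
    fun i j => withbot_le_sub (h i j)
  -- sum of w is at most sum of t
  obtain ⟨σ₀, hσ₀⟩ := exists_perm_prod_ne_zero hdet
  have hwt : ∀ i, w (σ₀ i) ≤ t i := by
    intro i
    by_contra hlt
    have hM0 : M (σ₀ i) i = 0 := hzero _ _ (by omega)
    exact hσ₀ i (by rw [hL, hM0, coeff_zero])
  have hw : ∑ i, w i ≤ ∑ j, t j := by
    calc ∑ i, w i = ∑ i, w (σ₀ i) := (Equiv.sum_comp σ₀ w).symm
      _ ≤ ∑ j, t j := Finset.sum_le_sum fun i _ => hwt i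
  set D := ∑ j, t j - ∑ i, w i with hD
  -- coefficient of each permutation product at D
  have hcoeff : ∀ σ : Equiv.Perm (Fin n),
      (∏ i, M (σ i) i).coeff D = ∏ i, L (σ i) i := by
    intro σ
    by_cases hσ : ∀ i, w (σ i) ≤ t i
    · have hsum : ∑ i, (t i - w (σ i)) = D := by
        rw [Finset.sum_tsub_distrib Finset.univ fun i _ => hσ i, hD, Equiv.sum_comp σ w]
      rw [← hsum, coeff_prod_deg _ _ _ fun i _ => hdegle (σ i) i]
      exact Finset.prod_congr rfl fun i _ => (hL (σ i) i).symm
    · push_neg at hσ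
      obtain ⟨i₀, hi₀⟩ := hσ
      have hM0 : M (σ i₀) i₀ = 0 := hzero _ _ (by omega)
      have hz : ∏ i, M (σ i) i = 0 := Finset.prod_eq_zero (Finset.mem_univ i₀) hM0
      have hz' : ∏ i, L (σ i) i = 0 :=
        Finset.prod_eq_zero (Finset.mem_univ i₀) (by rw [hL, hM0, coeff_zero])
      rw [hz, hz', coeff_zero]
  -- degree bound for each permutation product
  have hdegprod : ∀ σ : Equiv.Perm (Fin n),
      (∏ i, M (σ i) i).degree ≤ (D : WithBot ℕ) := by
    intro σ
    by_cases hσ : ∀ i, w (σ i) ≤ t i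
    · have hsum : ∑ i, (t i - w (σ i)) = D := by
        rw [Finset.sum_tsub_distrib Finset.univ fun i _ => hσ i, hD, Equiv.sum_comp σ w]
      refine (degree_prod_le _ _).trans ?_
      calc ∑ i, (M (σ i) i).degree ≤ ∑ i, ((t i - w (σ i) : ℕ) : WithBot ℕ) :=
            Finset.sum_le_sum fun i _ => hdegle (σ i) i
        _ = ((∑ i, (t i - w (σ i)) : ℕ) : WithBot ℕ) := (Nat.cast_sum _ _).symm
        _ = (D : WithBot ℕ) := by rw [hsum]
    · push_neg at hσ
      obtain ⟨i₀, hi₀⟩ := hσ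
      have hz : ∏ i, M (σ i) i = 0 :=
        Finset.prod_eq_zero (Finset.mem_univ i₀) (hzero (σ i₀) i₀ hi₀)
      rw [hz, degree_zero]
      exact bot_le
  -- degree of det ≤ D
  have hdegdet : M.det.degree ≤ (D : WithBot ℕ) := by
    rw [Matrix.det_apply']
    refine (degree_sum_le _ _).trans (Finset.sup_le fun σ _ => ?_)
    refine (degree_mul_le _ _).trans ?_
    calc ((Equiv.Perm.sign σ : ℤ) : K[X]).degree + (∏ i, M (σ i) i).degree
        ≤ 0 + (D : WithBot ℕ) := add_le_add (degree_intCast_le _) (hdegprod σ)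
      _ = (D : WithBot ℕ) := zero_add _
  -- coefficient of det at D equals det L
  have hcoeffdet : M.det.coeff D = L.det := by
    rw [Matrix.det_apply', Matrix.det_apply' (M := L), finset_sum_coeff]
    refine Finset.sum_congr rfl fun σ _ => ?_
    rcases Int.units_eq_one_or (Equiv.Perm.sign σ) with hs | hs <;> rw [hs]
    · simp [hcoeff σ]
    · push_cast
      simp [neg_mul, coeff_neg, hcoeff σ]
  have hne : M.det ≠ 0 := fun h0 => hdet (by rw [← hcoeffdet, h0, coeff_zero])
  refine ⟨hw, hne, le_antisymm hdegdet ?_⟩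
  exact le_degree_of_ne_zero (by rw [hcoeffdet]; exact hdet)

/-- Over a field, a matrix with linearly independent columns has an invertible
square row-submatrix. -/
lemma exists_invertible_rows {R : Type*} [Field R] {m n : ℕ} (M : Matrix (Fin m) (Fin n) R)
    (h : LinearIndependent R Mᵀ) : ∃ r : Fin n ↪ Fin m, (M.submatrix r id).det ≠ 0 := by
  classical
  have hrank : M.rank = n := by
    have h1 : Mᵀ.rank = Fintype.card (Fin n) := h.rank_matrix
    rw [Matrix.rank_transpose, Fintype.card_fin] at h1
    exact h1
  have hfr : Module.finrank R (Submodule.span R (Set.range M)) = n := by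
    exact (Matrix.rank_eq_finrank_span_row M).symm.trans hrank
  have hspan : Submodule.span R (Set.range M) = ⊤ := by
    apply Submodule.eq_top_of_finrank_eq
    rw [hfr, Module.finrank_fin_fun]
  obtain ⟨b, hb_sub, hb_span, hb_ind⟩ := exists_linearIndependent R (Set.range M)
  rw [hspan] at hb_span
  let B : Module.Basis b R (Fin n → R) := Module.Basis.mk hb_ind (by rw [Subtype.range_coe]; exact hb_span.ge)
  haveI : Fintype b := FiniteDimensional.fintypeBasisIndex B
  have hcard : Fintype.card b = n := by
    have := Module.finrank_eq_card_basis B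
    rw [Module.finrank_fin_fun] at this
    exact this.symm
  let e : Fin n ≃ b := (Fintype.equivFinOfCardEq hcard).symm
  have hsel : ∀ x : b, ∃ i : Fin m, M i = (x : Fin n → R) := fun x => hb_sub x.2
  choose g hg using hsel
  have hginj : Function.Injective g := by
    intro x y hxy
    apply Subtype.ext
    rw [← hg x, ← hg y, hxy]
  refine ⟨⟨fun j => g (e j), hginj.comp e.injective⟩, ?_⟩
  have hrows : LinearIndependent R (fun j : Fin n => (M.submatrix (fun j => g (e j)) id) j) := by
    have : (fun j : Fin n => (M.submatrix (fun j => g (e j)) id) j) =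
        fun j : Fin n => ((e j : Fin n → R)) := by
      funext j; rw [← hg (e j)]; rfl
    rw [this]
    exact hb_ind.comp (fun j => e j) e.injective
  have := Matrix.linearIndependent_rows_iff_isUnit.1 hrows
  exact (Matrix.isUnit_iff_isUnit_det _ |>.1 this).ne_zero

lemma submatrix_mul_split {R : Type*} [CommRing R] {α β γ₁ γ₂ n : Type*} [Fintype n]
    [Fintype γ₁] [Fintype γ₂] (A : Matrix α n R) (B : Matrix n β R) (φ : γ₁ ⊕ γ₂ ≃ n) :
    A.submatrix id (fun x => φ (Sum.inl x)) * B.submatrix (fun x => φ (Sum.inl x)) id +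
      A.submatrix id (fun x => φ (Sum.inr x)) * B.submatrix (fun x => φ (Sum.inr x)) id =
      A * B := by
  ext i j
  simp only [Matrix.add_apply, Matrix.mul_apply, Matrix.submatrix_apply, id_eq]
  rw [← Fintype.sum_sum_type (fun x : γ₁ ⊕ γ₂ => A i (φ x) * B (φ x) j)]
  exact Equiv.sum_comp φ fun x => A i x * B x j

/-- The key determinant identity. -/
lemma det_identity {k l : ℕ}
    (F : Matrix (Fin (k + l)) (Fin (k + l)) K[X]) (N : Matrix (Fin (k + l)) (Fin l) K[X])
    (hFUN : F.submatrix (Fin.castAdd l) id * N = 0) (r : Fin l ↪ Fin (k + l)) :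
    ∃ (φ : Fin k ⊕ Fin l ≃ Fin (k + l)) (u : K[X]), IsUnit u ∧ (∀ b, φ (Sum.inr b) = r b) ∧
      u * F.det * (N.submatrix (fun b => φ (Sum.inr b)) id).det =
        (F.submatrix (Fin.castAdd l) (fun a => φ (Sum.inl a))).det *
          (F.submatrix (Fin.natAdd k) id * N).det := by
  classical
  -- build the partition equivalence φ
  have hcardr : Fintype.card (Set.range ⇑r) = l := by
    calc Fintype.card (Set.range ⇑r) = Fintype.card (Fin l) :=
          (Fintype.card_congr (Equiv.ofInjective _ r.injective)).symm
      _ = l := Fintype.card_fin l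
  have hcard : Fintype.card ((Set.range ⇑r)ᶜ : Set (Fin (k + l))) = k := by
    rw [Fintype.card_compl_set, hcardr, Fintype.card_fin]
    omega
  let eC : Fin k ≃ ((Set.range ⇑r)ᶜ : Set (Fin (k + l))) := (Fintype.equivFinOfCardEq hcard).symm
  let eR : Fin l ≃ (Set.range ⇑r : Set (Fin (k + l))) := Equiv.ofInjective _ r.injective
  let φ : Fin k ⊕ Fin l ≃ Fin (k + l) :=
    (eC.sumCongr eR).trans ((Equiv.sumComm _ _).trans (Equiv.Set.sumCompl (Set.range ⇑r)))
  have hφr : ∀ b, φ (Sum.inr b) = r b := by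
    intro b
    simp [φ, eR, Equiv.Set.sumCompl_apply_inl]
  let ψ : Fin k ⊕ Fin l ≃ Fin (k + l) := finSumFinEquiv
  let τ : Equiv.Perm (Fin k ⊕ Fin l) := φ.trans ψ.symm
  let C : Matrix (Fin k ⊕ Fin l) (Fin k ⊕ Fin l) K[X] :=
    Matrix.fromBlocks 1 (N.submatrix (fun a => φ (Sum.inl a)) id) 0
      (N.submatrix (fun b => φ (Sum.inr b)) id)
  let A : Matrix (Fin k ⊕ Fin l) (Fin k ⊕ Fin l) K[X] := F.submatrix ⇑ψ ⇑φ
  have hdetA : A.det = ((Equiv.Perm.sign τ : ℤ) : K[X]) * F.det := by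
    have hA : A = (F.submatrix ⇑ψ ⇑ψ).submatrix id ⇑τ := by
      ext i j
      simp [A, τ, Matrix.submatrix_apply]
    rw [hA, Matrix.det_permute', Matrix.det_submatrix_equiv_self]
  have hAblocks : A = Matrix.fromBlocks
      (F.submatrix (Fin.castAdd l) (fun a => φ (Sum.inl a)))
      (F.submatrix (Fin.castAdd l) (fun b => φ (Sum.inr b)))
      (F.submatrix (Fin.natAdd k) (fun a => φ (Sum.inl a)))
      (F.submatrix (Fin.natAdd k) (fun b => φ (Sum.inr b))) := by
    ext i j
    cases i <;> cases j <;> simp [A, ψ, Matrix.submatrix_apply]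
  have hmul : A * C = Matrix.fromBlocks
      (F.submatrix (Fin.castAdd l) (fun a => φ (Sum.inl a))) 0
      (F.submatrix (Fin.natAdd k) (fun a => φ (Sum.inl a)))
      (F.submatrix (Fin.natAdd k) id * N) := by
    rw [hAblocks, Matrix.fromBlocks_multiply]
    have e12 : F.submatrix (Fin.castAdd l) (fun a => φ (Sum.inl a)) *
          N.submatrix (fun a => φ (Sum.inl a)) id +
        F.submatrix (Fin.castAdd l) (fun b => φ (Sum.inr b)) *
          N.submatrix (fun b => φ (Sum.inr b)) id = 0 := by
      have := submatrix_mul_split (F.submatrix (Fin.castAdd l) id) N φ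
      simpa [Matrix.submatrix_submatrix, Function.comp] using this.trans hFUN
    have e22 : F.submatrix (Fin.natAdd k) (fun a => φ (Sum.inl a)) *
          N.submatrix (fun a => φ (Sum.inl a)) id +
        F.submatrix (Fin.natAdd k) (fun b => φ (Sum.inr b)) *
          N.submatrix (fun b => φ (Sum.inr b)) id = F.submatrix (Fin.natAdd k) id * N := by
      have := submatrix_mul_split (F.submatrix (Fin.natAdd k) id) N φ
      simpa [Matrix.submatrix_submatrix, Function.comp] using this
    rw [Matrix.mul_one, Matrix.mul_zero, add_zero, Matrix.mul_one, Matrix.mul_zero, add_zero,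
      e12, e22]
  have hdetC : C.det = (N.submatrix (fun b => φ (Sum.inr b)) id).det := by
    rw [show C = Matrix.fromBlocks 1 (N.submatrix (fun a => φ (Sum.inl a)) id) 0
      (N.submatrix (fun b => φ (Sum.inr b)) id) from rfl, Matrix.det_fromBlocks_zero₂₁,
      Matrix.det_one, one_mul]
  refine ⟨φ, ((Equiv.Perm.sign τ : ℤ) : K[X]), ?_, hφr, ?_⟩
  · rcases Int.units_eq_one_or (Equiv.Perm.sign τ) with hs | hs <;> rw [hs] <;> push_cast
    · exact isUnit_one
    · exact (isUnit_one.neg)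
  · calc ((Equiv.Perm.sign τ : ℤ) : K[X]) * F.det * (N.submatrix (fun b => φ (Sum.inr b)) id).det
        = A.det * C.det := by rw [hdetA, hdetC]
      _ = (A * C).det := (Matrix.det_mul _ _).symm
      _ = _ := by rw [hmul, Matrix.det_fromBlocks_zero₁₂]

/-- No irreducible polynomial divides all maximal minors of a kernel basis. -/
lemma irreducible_not_dvd_all_minors {k l : ℕ}
    (N : Matrix (Fin (k + l)) (Fin l) K[X]) (FU : Matrix (Fin k) (Fin (k + l)) K[X])
    (hNli : LinearIndependent K[X] Nᵀ) (hFUN : FU * N = 0)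
    (hgen : ∀ q : Fin (k + l) → K[X], FU.mulVec q = 0 → ∃ p : Fin l → K[X], q = N.mulVec p)
    {p : K[X]} (hp : Irreducible p)
    (hdvd : ∀ r : Fin l ↪ Fin (k + l), p ∣ (N.submatrix r id).det) : False := by
  classical
  have hp0 : p ≠ 0 := hp.ne_zero
  haveI hmax : (Ideal.span {p}).IsMaximal := PrincipalIdealRing.isMaximal_of_irreducible hp
  letI : Field (K[X] ⧸ Ideal.span {p}) := Ideal.Quotient.field _
  set π := Ideal.Quotient.mk (Ideal.span {p}) with hπ
  set M' : Matrix (Fin (k + l)) (Fin l) (K[X] ⧸ Ideal.span {p}) := N.map π with hM'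
  have hnotli : ¬ LinearIndependent (K[X] ⧸ Ideal.span {p}) M'ᵀ := by
    intro hli
    obtain ⟨r, hr⟩ := exists_invertible_rows M' hli
    apply hr
    have hsub : M'.submatrix r id = (N.submatrix r id).map π := by
      rw [hM', Matrix.submatrix_map]
    rw [hsub]
    have hmd : ((N.submatrix r id).map ⇑π).det = π (N.submatrix r id).det := by
      rw [RingHom.map_det]
      rfl
    rw [hmd, Ideal.Quotient.eq_zero_iff_mem]
    exact Ideal.mem_span_singleton.2 (hdvd r)
  replace hnotli := Fintype.not_linearIndependent_iff.1 hnotli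
  obtain ⟨g, hg0, i₀, hi₀⟩ := hnotli
  choose c hc using fun i => Ideal.Quotient.mk_surjective (I := Ideal.span {p}) (g i)
  have hNc : ∀ j, π ((N.mulVec c) j) = 0 := by
    intro j
    have hgj := congrFun hg0 j
    simp only [Pi.smul_apply, Matrix.transpose_apply, smul_eq_mul, Finset.sum_apply,
      Pi.zero_apply] at hgj
    rw [Matrix.mulVec, dotProduct, map_sum]
    rw [← hgj]
    refine Finset.sum_congr rfl fun i _ => ?_
    rw [_root_.map_mul, hc i, hM', Matrix.map_apply, mul_comm]
  have hdvdc : ∀ j, p ∣ (N.mulVec c) j := fun j =>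
    Ideal.mem_span_singleton.1 (Ideal.Quotient.eq_zero_iff_mem.1 (hNc j))
  choose q hq using hdvdc
  have hFUq : FU.mulVec q = 0 := by
    have h1 : FU.mulVec (N.mulVec c) = 0 := by
      rw [Matrix.mulVec_mulVec, hFUN, Matrix.zero_mulVec]
    have h2 : N.mulVec c = p • q := funext hq
    rw [h2, Matrix.mulVec_smul] at h1
    funext j
    have := congrFun h1 j
    simp only [Pi.smul_apply, smul_eq_mul, Pi.zero_apply] at this
    have := mul_eq_zero.1 this
    tauto
  obtain ⟨c', hc'⟩ := hgen q hFUq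
  have hinj : Function.Injective N.mulVec :=
    Matrix.mulVec_injective_iff.2 hNli
  have hcc : c = p • c' := by
    apply hinj
    rw [Matrix.mulVec_smul, ← hc']
    exact funext hq
  apply hi₀
  rw [← hc i₀, hcc]
  simp only [Pi.smul_apply, smul_eq_mul]
  exact Ideal.Quotient.eq_zero_iff_mem.2 (Ideal.mem_span_singleton.2 (dvd_mul_right p _))

end Helpers

/-- Let `F` be nonsingular of size `(k+l) × (k+l)` with column
degrees `s`, partitioned as `F = [F_U; F_D]` with `F_U` the top `k` rows.  If `N`
is an `s`-minimal kernel basis of `F_U` and `G₂ = F_D * N`, then the sum of the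
column degrees of `G₂` is at most `∑ s`. -/
theorem sum_column_degrees_second_diagonal_block_le
    {K : Type*} [Field K] {k l : ℕ}
    (F : Matrix (Fin (k + l)) (Fin (k + l)) K[X]) (hF : F.det ≠ 0)
    (s : Fin (k + l) → ℕ)
    (hs : ∀ j, colDeg (Fᵀ j) = (s j : WithBot ℕ))
    (N : Matrix (Fin (k + l)) (Fin l) K[X])
    (hker : IsKernelBasis (F.submatrix (Fin.castAdd l) id) N)
    (hred : IsSColumnReduced s N) :
    ∑ j : Fin l, colDeg ((F.submatrix (Fin.natAdd k) id * N)ᵀ j) ≤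
      ((∑ i, s i : ℕ) : WithBot ℕ) := by
  classical
  letI : NormalizedGCDMonoid K[X] := Polynomial.normalizedGcdMonoid
  obtain ⟨hNli, hFUN, hgen⟩ := hker
  set G₂ := F.submatrix (Fin.natAdd k) id * N with hG₂def
  -- columns of N are nonzero, so their shifted degrees are naturals
  have htn' : ∀ j, ∃ m : ℕ, sColDeg s (Nᵀ j) = (m : WithBot ℕ) := by
    intro j
    have hne : Nᵀ j ≠ 0 := hNli.ne_zero j
    have : ∃ i, N i j ≠ 0 := by
      by_contra hcon
      push_neg at hcon
      exact hne (funext fun i => hcon i)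
    obtain ⟨i, hi⟩ := this
    have hnb : sColDeg s (Nᵀ j) ≠ ⊥ := by
      intro hbot
      have h1 : (N i j).degree + (s i : WithBot ℕ) ≤ ⊥ := by
        rw [← hbot]
        exact Finset.le_sup (f := fun i => ((Nᵀ j) i).degree + (s i : WithBot ℕ))
          (Finset.mem_univ i)
      rw [le_bot_iff, WithBot.add_eq_bot] at h1
      rcases h1 with h1 | h1
      · exact hi (degree_eq_bot.1 h1)
      · exact WithBot.coe_ne_bot h1
    obtain ⟨m, hm⟩ := WithBot.ne_bot_iff_exists.1 hnb
    exact ⟨m, hm.symm⟩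
  choose tn htn using htn'
  have hentry : ∀ i j, (N i j).degree + (s i : WithBot ℕ) ≤ (tn j : WithBot ℕ) := by
    intro i j
    rw [← htn j]
    exact Finset.le_sup (f := fun i => ((Nᵀ j) i).degree + (s i : WithBot ℕ))
      (Finset.mem_univ i)
  have hFdeg : ∀ i j, (F i j).degree ≤ (s j : WithBot ℕ) := by
    intro i j
    rw [← hs j]
    exact Finset.le_sup (f := fun i => ((Fᵀ j) i).degree) (Finset.mem_univ i)
  -- bridge: shifted leading coefficient matrix entries as coefficients
  have hbridge : ∀ i j, sLeadingCoeffMatrix s N i j = (N i j).coeff (tn j - s i) := by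
    intro i j
    show (if (N i j).degree + (s i : WithBot ℕ) = sColDeg s (Nᵀ j) then (N i j).leadingCoeff
      else 0) = (N i j).coeff (tn j - s i)
    rw [htn j]
    by_cases hNij : N i j = 0
    · rw [if_neg, hNij, coeff_zero]
      rw [hNij, degree_zero]
      simp
    · rw [degree_eq_natDegree hNij]
      have hle := hentry i j
      rw [degree_eq_natDegree hNij] at hle
      have hle' : (N i j).natDegree + s i ≤ tn j := by
        have : (((N i j).natDegree + s i : ℕ) : WithBot ℕ) ≤ ((tn j : ℕ) : WithBot ℕ) := by
          rw [Nat.cast_add]; exact hle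
        exact_mod_cast this
      by_cases hcond : (N i j).natDegree + s i = tn j
      · rw [if_pos, show tn j - s i = (N i j).natDegree by omega, coeff_natDegree]
        rw [← Nat.cast_add, hcond]
      · rw [if_neg, coeff_eq_zero_of_natDegree_lt (by omega)]
        rw [← Nat.cast_add]
        exact_mod_cast hcond
  -- choose rows where the leading coefficient matrix is invertible
  obtain ⟨r₀, hr₀⟩ := exists_invertible_rows (sLeadingCoeffMatrix s N) hred
  obtain ⟨hwle, hminor_ne, hminor_deg⟩ :=
    det_shift_degree (N.submatrix r₀ id) (fun i => s (r₀ i)) tn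
      (fun i j => hentry (r₀ i) j)
      ((sLeadingCoeffMatrix s N).submatrix r₀ id)
      (fun i j => hbridge (r₀ i) j) hr₀
  -- divisibility: det G₂ divides det F
  have hdvd : ∀ r : Fin l ↪ Fin (k + l), G₂.det ∣ F.det * (N.submatrix r id).det := by
    intro r
    obtain ⟨φ, u, hu, hφr, heq⟩ := det_identity F N hFUN r
    have hrw : (fun b => φ (Sum.inr b)) = fun b => r b := funext hφr
    rw [hrw] at heq
    have h1 : G₂.det ∣ u * (F.det * (N.submatrix (fun b => r b) id).det) := by
      rw [← mul_assoc, heq, ← hG₂def]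
      exact dvd_mul_left _ _
    rcases hu with ⟨uu, rfl⟩
    exact (Units.dvd_mul_left).1 h1
  have hgne : Finset.univ.gcd (fun r : Fin l ↪ Fin (k + l) => (N.submatrix r id).det) ≠ 0 := by
    intro h0
    apply hminor_ne
    have := Finset.gcd_dvd (Finset.mem_univ r₀)
      (f := fun r : Fin l ↪ Fin (k + l) => (N.submatrix r id).det)
    rw [h0] at this
    exact zero_dvd_iff.1 this
  have hgunit : IsUnit (Finset.univ.gcd
      (fun r : Fin l ↪ Fin (k + l) => (N.submatrix r id).det)) := by
    by_contra hgu
    obtain ⟨p, hpirr, hpg⟩ := WfDvdMonoid.exists_irreducible_factor hgu hgne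
    exact irreducible_not_dvd_all_minors N (F.submatrix (Fin.castAdd l) id) hNli hFUN hgen hpirr
      fun r => hpg.trans (Finset.gcd_dvd (Finset.mem_univ r))
  have hdetdvd : G₂.det ∣ F.det := by
    have h1 : G₂.det ∣ Finset.univ.gcd
        (fun r : Fin l ↪ Fin (k + l) => F.det * (N.submatrix r id).det) :=
      Finset.dvd_gcd fun r _ => hdvd r
    rw [Finset.gcd_mul_left] at h1
    rcases hgunit with ⟨v, hv⟩
    rw [← hv] at h1
    have h2 : G₂.det ∣ normalize F.det := (Units.dvd_mul_right).1 h1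
    exact dvd_normalize_iff.1 h2
  -- the degree identity at r₀
  obtain ⟨φ, u, hu, hφr, heq⟩ := det_identity F N hFUN r₀
  have hrw : (fun b => φ (Sum.inr b)) = fun b => r₀ b := funext hφr
  rw [hrw] at heq
  rw [← hG₂def] at heq
  set e₁ : Fin k → Fin (k + l) := fun a => φ (Sum.inl a) with he₁
  set A₁ := F.submatrix (Fin.castAdd l) e₁ with hA₁
  have hu0 : u ≠ 0 := hu.ne_zero
  have hlhs_ne : u * F.det * (N.submatrix (fun b => r₀ b) id).det ≠ 0 :=
    mul_ne_zero (mul_ne_zero hu0 hF) hminor_ne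
  have hA₁ne : A₁.det ≠ 0 := left_ne_zero_of_mul (heq ▸ hlhs_ne)
  have hG₂ne : G₂.det ≠ 0 := right_ne_zero_of_mul (heq ▸ hlhs_ne)
  -- degree bound on A₁
  have hA₁deg : A₁.det.natDegree ≤ ∑ a, s (e₁ a) := by
    refine natDegree_le_iff_degree_le.2 ?_
    have := degree_det_le_sum A₁ (fun a => (s (e₁ a) : WithBot ℕ))
      (fun i j => hFdeg (Fin.castAdd l i) (e₁ j))
    rwa [← Nat.cast_sum] at this
  -- natDegree equation
  have hDnat : (N.submatrix (fun b => r₀ b) id).det.natDegree =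
      ∑ j, tn j - ∑ i, s (r₀ i) := by
    have : (N.submatrix (fun b => r₀ b) id) = N.submatrix r₀ id := rfl
    rw [this]
    exact natDegree_eq_of_degree_eq_some hminor_deg
  have hup : u.natDegree = 0 := natDegree_eq_zero_of_isUnit hu
  have hnat : F.det.natDegree + (∑ j, tn j - ∑ i, s (r₀ i)) =
      A₁.det.natDegree + G₂.det.natDegree := by
    have h1 := congrArg natDegree heq
    rw [natDegree_mul (mul_ne_zero hu0 hF) hminor_ne, natDegree_mul hu0 hF,
      natDegree_mul hA₁ne hG₂ne, hDnat, hup] at h1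
    omega
  have hG₂le : G₂.det.natDegree ≤ F.det.natDegree :=
    natDegree_le_natDegree (degree_le_of_dvd hdetdvd hF)
  have hD : ∑ j, tn j - ∑ i, s (r₀ i) ≤ ∑ a, s (e₁ a) := by omega
  have hpart : ∑ a, s (e₁ a) + ∑ b, s (r₀ b) = ∑ i, s i := by
    have h1 : ∑ x : Fin k ⊕ Fin l, s (φ x) = ∑ i, s i := Equiv.sum_comp φ s
    rw [Fintype.sum_sum_type] at h1
    rw [← h1, he₁]
    congr 1
    exact Finset.sum_congr rfl fun b _ => by rw [hφr b]
  have htnsum : ∑ j, tn j ≤ ∑ i, s i := by omega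
  -- column degrees of G₂ are bounded by tn
  have hcolG : ∀ j, colDeg (G₂ᵀ j) ≤ ((tn j : ℕ) : WithBot ℕ) := by
    intro j
    refine Finset.sup_le fun i _ => ?_
    show (G₂ i j).degree ≤ ((tn j : ℕ) : WithBot ℕ)
    rw [hG₂def, Matrix.mul_apply]
    refine (degree_sum_le _ _).trans (Finset.sup_le fun m _ => ?_)
    calc (F.submatrix (Fin.natAdd k) id i m * N m j).degree
        ≤ (F (Fin.natAdd k i) m).degree + (N m j).degree := degree_mul_le _ _
      _ ≤ (s m : WithBot ℕ) + (N m j).degree := add_le_add_left (hFdeg _ m) _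
      _ = (N m j).degree + (s m : WithBot ℕ) := add_comm _ _
      _ ≤ ((tn j : ℕ) : WithBot ℕ) := hentry m j
  calc ∑ j : Fin l, colDeg (G₂ᵀ j) ≤ ∑ j : Fin l, ((tn j : ℕ) : WithBot ℕ) :=
        Finset.sum_le_sum fun j _ => hcolG j
    _ = ((∑ j, tn j : ℕ) : WithBot ℕ) := (Nat.cast_sum _ _).symm
    _ ≤ ((∑ i, s i : ℕ) : WithBot ℕ) := by exact_mod_cast htnsum
end

section
/- Let K be a field and F ∈ K[x]^{n×n} nonsingular. Suppose U = [U_L, U_R] ∈ K[x]^{n×n} is unimodular (U_L its first k columns) with F·U = G = [[G_1, 0], [*, G_2]] block lower triangular where G_1 is k×k, and let V = U^{-1} with V_U its top k rows. If U_L* ∈ K[x]^{n×k} is any matrix such that U* = [U_L*, U_R] is unimodular, then det F = det G · det(V_U · U_L*) / det(U*). -/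
open Polynomial Matrix

/-- Let `F` be nonsingular, `U = [U_L, U_R]` unimodular with
`F * U = G` block lower triangular (top-right `k × l` block zero), and
`V = U⁻¹` with top `k` rows `V_U`.  If `U_L*` is any matrix such that
`U* = [U_L*, U_R]` is unimodular, then
`det F = det G * det (V_U * U_L*) / det U*`. -/
theorem det_via_unimodular_completion
    {K : Type*} [Field K] {k l : ℕ}
    (F : Matrix (Fin (k + l)) (Fin (k + l)) K[X]) (hF : F.det ≠ 0)
    (U : Matrix (Fin (k + l)) (Fin (k + l)) K[X])
    (hU : ∃ c : K, c ≠ 0 ∧ U.det = Polynomial.C c)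
    (htri : (F * U).submatrix (Fin.castAdd l) (Fin.natAdd k) = 0)
    (V : Matrix (Fin (k + l)) (Fin (k + l)) K[X])
    (hV : U * V = 1 ∧ V * U = 1)
    (ULs : Matrix (Fin (k + l)) (Fin k) K[X])
    -- `U* = [U_L*, U_R]` as a square `(k+l) × (k+l)` matrix
    (Ustar : Matrix (Fin (k + l)) (Fin (k + l)) K[X])
    (hUstar : Ustar = (Matrix.fromCols ULs
        (U.submatrix id (Fin.natAdd k))).submatrix id finSumFinEquiv.symm)
    (hUstarUni : ∃ c : K, c ≠ 0 ∧ Ustar.det = Polynomial.C c) :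
    F.det = (F * U).det *
        (V.submatrix (Fin.castAdd l) id * ULs).det / Ustar.det := by
  obtain ⟨c, hc, hdet⟩ := hUstarUni
  have hUs0 : Ustar.det ≠ 0 := by
    rw [hdet]; exact fun h => hc (by simpa using h)
  have hblock : (V * Ustar).submatrix ⇑finSumFinEquiv ⇑finSumFinEquiv =
      Matrix.fromBlocks (V.submatrix (Fin.castAdd l) id * ULs) 0
        (V.submatrix (Fin.natAdd k) id * ULs) 1 := by
    have hcolL : ∀ (m : Fin (k + l)) (j : Fin k),
        Ustar m (Fin.castAdd l j) = ULs m j := by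
      intro m j
      rw [hUstar]
      have : Fin.castAdd l j = finSumFinEquiv (Sum.inl j) := by simp
      rw [this]
      simp [Matrix.fromCols]
    have hcolR : ∀ (m : Fin (k + l)) (j : Fin l),
        Ustar m (Fin.natAdd k j) = U m (Fin.natAdd k j) := by
      intro m j
      rw [hUstar]
      have : Fin.natAdd k j = finSumFinEquiv (Sum.inr j) := by simp
      rw [this]
      simp [Matrix.fromCols]
    refine Matrix.ext fun i j => ?_
    rcases i with i | i <;> rcases j with j | j <;>
      simp only [Matrix.submatrix_apply, Matrix.mul_apply, hcolL, hcolR, Matrix.fromBlocks_apply₁₁, Matrix.fromBlocks_apply₁₂,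
        Matrix.fromBlocks_apply₂₁, Matrix.fromBlocks_apply₂₂,
        finSumFinEquiv_apply_left, finSumFinEquiv_apply_right, id_eq]
    · have h2 : ∑ m, V (Fin.castAdd l i) m * U m (Fin.natAdd k j) =
          (V * U) (Fin.castAdd l i) (Fin.natAdd k j) := (Matrix.mul_apply).symm
      rw [h2, hV.2, Matrix.one_apply_ne]
      · simp
      · intro h
        have := Fin.val_eq_of_eq h
        simp at this
        omega
    · have h2 : ∑ m, V (Fin.natAdd k i) m * U m (Fin.natAdd k j) =
          (V * U) (Fin.natAdd k i) (Fin.natAdd k j) := (Matrix.mul_apply).symm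
      rw [h2, hV.2]
      by_cases hij : i = j
      · subst hij; simp [Matrix.one_apply]
      · rw [Matrix.one_apply_ne, Matrix.one_apply_ne hij]
        intro h
        apply hij
        have := Fin.val_eq_of_eq h
        simp at this
        exact Fin.ext (by omega)
  have hkey : V.det * Ustar.det = (V.submatrix (Fin.castAdd l) id * ULs).det := by
    calc V.det * Ustar.det = (V * Ustar).det := (Matrix.det_mul _ _).symm
    _ = ((V * Ustar).submatrix ⇑finSumFinEquiv ⇑finSumFinEquiv).det :=
        (Matrix.det_submatrix_equiv_self finSumFinEquiv _).symm
    _ = _ := by rw [hblock, Matrix.det_fromBlocks_zero₁₂]; simp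
  have hUV : U.det * V.det = 1 := by
    rw [← Matrix.det_mul, hV.1, Matrix.det_one]
  rw [Matrix.det_mul, ← hkey]
  have hthis : F.det * U.det * (V.det * Ustar.det) = F.det * Ustar.det := by
    linear_combination F.det * Ustar.det * hUV
  rw [hthis, mul_div_cancel_right₀ _ hUs0]
end

section
/- Let K be a field and F ∈ K[x]^{n×n} nonsingular. Suppose U = [U_L, U_R] ∈ K[x]^{n×n} is unimodular with F·U = G = [[G_1, 0], [*, G_2]] block lower triangular where G_1 is k×k, and let V = U^{-1} with V_U its top k rows. Let u_R = U_R mod x ∈ K^{n×(n−k)} and v_U = V_U mod x ∈ K^{k×n} be the constant coefficient matrices. If u_L* ∈ K^{n×k} is any constant matrix such that u* = [u_L*, u_R] ∈ K^{n×n} is invertible, then det F = det G · det(v_U · u_L*) / det(u*). -/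
open Polynomial Matrix

/-- Let `F` be nonsingular, `U = [U_L, U_R]` unimodular with
`F * U = G` block lower triangular (top-right `k × l` block zero), and
`V = U⁻¹` with top `k` rows `V_U`.  Let `u_R = U_R mod x` and `v_U = V_U mod x`
be the constant coefficient matrices.  If `u_L*` is any constant matrix such
that `u* = [u_L*, u_R]` is invertible over `K`, then
`det F = det G * det (v_U * u_L*) / det u*`. -/
theorem det_via_constant_unimodular_completion
    {K : Type*} [Field K] {k l : ℕ}
    (F : Matrix (Fin (k + l)) (Fin (k + l)) K[X]) (hF : F.det ≠ 0)
    (U : Matrix (Fin (k + l)) (Fin (k + l)) K[X])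
    (hU : ∃ c : K, c ≠ 0 ∧ U.det = Polynomial.C c)
    (htri : (F * U).submatrix (Fin.castAdd l) (Fin.natAdd k) = 0)
    (V : Matrix (Fin (k + l)) (Fin (k + l)) K[X])
    (hV : U * V = 1 ∧ V * U = 1)
    (uLs : Matrix (Fin (k + l)) (Fin k) K)
    -- `u* = [u_L*, u_R]` as a square `(k+l) × (k+l)` constant matrix
    (ustar : Matrix (Fin (k + l)) (Fin (k + l)) K)
    (hustar : ustar = (Matrix.fromCols uLs
        ((U.submatrix id (Fin.natAdd k)).map (fun p => p.eval 0))).submatrix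
          id finSumFinEquiv.symm)
    (hinv : ustar.det ≠ 0) :
    F.det = (F * U).det *
        Polynomial.C
          ((((V.submatrix (Fin.castAdd l) id).map (fun p => p.eval 0)) * uLs).det /
            ustar.det) := by
  obtain ⟨c, hc, hdetU⟩ := hU
  obtain ⟨hUV, hVU⟩ := hV
  set φ : K[X] →+* K := Polynomial.evalRingHom (0 : K) with hφ
  set v : Matrix (Fin (k+l)) (Fin (k+l)) K := V.map φ with hv
  set u : Matrix (Fin (k+l)) (Fin (k+l)) K := U.map φ with hu
  have hvu : v * u = 1 := by
    rw [hv, hu, ← Matrix.map_mul, hVU, Matrix.map_one φ (map_zero φ) (map_one φ)]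
  have hdetu : u.det = c := by
    have h := (RingHom.map_det φ U).symm
    rw [RingHom.mapMatrix_apply] at h
    rw [hu, h, hdetU]
    simp [hφ]
  have hdetv : v.det * c = 1 := by
    have := congrArg Matrix.det hvu
    rwa [Matrix.det_mul, hdetu, Matrix.det_one] at this
  -- main identity
  have h1 : v * ustar = (Matrix.fromCols (v * uLs)
      ((1 : Matrix (Fin (k+l)) (Fin (k+l)) K).submatrix id (Fin.natAdd k))).submatrix
        id finSumFinEquiv.symm := by
    subst hustar
    ext i j
    rcases hj : finSumFinEquiv.symm j with a | a <;>
      simp [Matrix.mul_apply, hj, Matrix.fromCols, hv, hu, ← hvu, hφ, Polynomial.coe_evalRingHom]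
  have h2 : ((v * ustar).submatrix finSumFinEquiv finSumFinEquiv) =
      Matrix.fromBlocks
        (((V.submatrix (Fin.castAdd l) id).map (fun p => p.eval 0)) * uLs) 0
        ((v * uLs).submatrix (Fin.natAdd k) id) 1 := by
    rw [h1]
    ext i j
    cases i with
    | inl a =>
      cases j with
      | inl b =>
        simp [Matrix.fromCols, Matrix.mul_apply, hv, hφ, Polynomial.coe_evalRingHom]
      | inr b =>
        simp [Matrix.fromCols, Matrix.one_apply, Fin.ext_iff] <;> omega
    | inr a =>
      cases j with
      | inl b => simp [Matrix.fromCols]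
      | inr b =>
        simp [Matrix.fromCols, Matrix.one_apply, Fin.ext_iff] <;> omega
  have key : (((V.submatrix (Fin.castAdd l) id).map (fun p => p.eval 0)) * uLs).det
      = v.det * ustar.det := by
    have := Matrix.det_submatrix_equiv_self finSumFinEquiv (v * ustar)
    rw [h2] at this
    rw [Matrix.det_fromBlocks_zero₁₂, Matrix.det_one, mul_one] at this
    rw [this, Matrix.det_mul]
  have hfrac : (((V.submatrix (Fin.castAdd l) id).map (fun p => p.eval 0)) * uLs).det /
      ustar.det = c⁻¹ := by
    rw [key, mul_div_assoc, div_self hinv, mul_one]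
    field_simp
    linear_combination hdetv
  rw [hfrac, Matrix.det_mul, hdetU]
  rw [mul_assoc, ← Polynomial.C_mul, mul_inv_cancel₀ hc]
  simp
end

section
/- Let K be a field, F ∈ K[x]^{n×n} nonsingular, partitioned as F = [F_U; F_D] with F_U the top k rows (1 ≤ k < n). Then F_U and F_D both have full row rank, and if U ∈ K[x]^{n×n} is unimodular with F·U = [[G_1, 0], [*, G_2]] block lower triangular (G_1 of size k×k), then G_1 is nonsingular and G_1 is a column basis of F_U. -/
open Polynomial Matrix

/-- Rows of a square matrix with nonzero determinant over a domain are linearly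
independent. -/
theorem rows_linearIndependent_of_det_ne_zero {R : Type*} [CommRing R] [IsDomain R]
    {n : Type*} [Fintype n] [DecidableEq n] {M : Matrix n n R} (h : M.det ≠ 0) :
    LinearIndependent R M := by
  refine Fintype.linearIndependent_iff.mpr ?_
  intro c hc i
  have h0 : M.vecMul c = 0 := by
    funext j
    simpa [Matrix.vecMul, dotProduct] using congrFun hc j
  have h1 : (M * M.adjugate).vecMul c = 0 := by
    rw [← Matrix.vecMul_vecMul, h0]
    simp
  rw [Matrix.mul_adjugate] at h1
  have h2 := congrFun h1 i
  simp only [Matrix.vecMul, dotProduct, Matrix.smul_apply, Matrix.one_apply,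
    smul_eq_mul, mul_ite, mul_one, mul_zero, Finset.sum_ite_eq', Finset.mem_univ,
    if_true, Pi.zero_apply] at h2
  exact (mul_eq_zero.mp h2).resolve_right h

/-- Let `F` be nonsingular of size `(k+l) × (k+l)` with
`k, l ≥ 1`, partitioned as `F = [F_U; F_D]` with `F_U` the top `k` rows.  Then
`F_U` and `F_D` have full row rank, and for any unimodular `U` such that
`F * U = [[G₁, 0], [*, G₂]]` is block lower triangular (`G₁` of size `k × k`),
the block `G₁` is nonsingular and is a column basis of `F_U`. -/
theorem top_block_nonsingular_column_basis
    {K : Type*} [Field K] {k l : ℕ} (hk : 0 < k) (hl : 0 < l)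
    (F : Matrix (Fin (k + l)) (Fin (k + l)) K[X]) (hF : F.det ≠ 0) :
    LinearIndependent K[X] (fun i : Fin k => F (Fin.castAdd l i)) ∧
    LinearIndependent K[X] (fun i : Fin l => F (Fin.natAdd k i)) ∧
    ∀ U : Matrix (Fin (k + l)) (Fin (k + l)) K[X],
      (∃ c : K, c ≠ 0 ∧ U.det = Polynomial.C c) →
      (F * U).submatrix (Fin.castAdd l) (Fin.natAdd k) = 0 →
      ((F * U).submatrix (Fin.castAdd l) (Fin.castAdd l)).det ≠ 0 ∧
      IsColumnBasis (F.submatrix (Fin.castAdd l) id)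
        ((F * U).submatrix (Fin.castAdd l) (Fin.castAdd l)) := by
  have hrows : LinearIndependent K[X] F := rows_linearIndependent_of_det_ne_zero hF
  have hnatAddInj : Function.Injective (Fin.natAdd k : Fin l → Fin (k + l)) := by
    intro a b h
    have : (k : ℕ) + a = k + b := congrArg Fin.val h
    exact Fin.ext (by omega)
  refine ⟨hrows.comp _ (Fin.castAdd_injective _ _), hrows.comp _ hnatAddInj, ?_⟩
  intro U hU hzero
  obtain ⟨c, hc, hUdet⟩ := hU
  have hUdet' : U.det ≠ 0 := by
    rw [hUdet]; exact fun h => hc (by simpa using h)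
  have hUunit : IsUnit U.det := by
    rw [hUdet]; exact (Polynomial.isUnit_C).mpr (isUnit_iff_ne_zero.mpr hc)
  set M := F * U with hM
  have hMdet : M.det ≠ 0 := by
    rw [hM, Matrix.det_mul]
    exact mul_ne_zero hF hUdet'
  set e := (finSumFinEquiv : Fin k ⊕ Fin l ≃ Fin (k + l)) with he
  have hz : ∀ (i : Fin k) (b : Fin l), M (Fin.castAdd l i) (Fin.natAdd k b) = 0 := by
    intro i b
    exact congrFun (congrFun hzero i) b
  have hblock : M.det = (M.submatrix (Fin.castAdd l) (Fin.castAdd l)).det *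
      (M.submatrix (Fin.natAdd k) (Fin.natAdd k)).det := by
    have h1 : M.det = (M.submatrix e e).det := (Matrix.det_submatrix_equiv_self e M).symm
    rw [h1]
    have h2 : M.submatrix e e = Matrix.fromBlocks
        (M.submatrix (Fin.castAdd l) (Fin.castAdd l)) 0
        (M.submatrix (Fin.natAdd k) (Fin.castAdd l))
        (M.submatrix (Fin.natAdd k) (Fin.natAdd k)) := by
      refine Matrix.ext fun i j => ?_
      cases i with
      | inl i => cases j with
        | inl j => simp [e]
        | inr j => simpa [e, Matrix.fromBlocks] using hz i j
      | inr i => cases j with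
        | inl j => simp [e]
        | inr j => simp [e]
    rw [h2, Matrix.det_fromBlocks_zero₁₂]
  have hG1 : (M.submatrix (Fin.castAdd l) (Fin.castAdd l)).det ≠ 0 := by
    intro h
    rw [hblock, h, zero_mul] at hMdet
    exact hMdet rfl
  -- key computation: top part of M *ᵥ w is G₁ *ᵥ (top part of w)
  have htop : ∀ (w : Fin (k + l) → K[X]) (i : Fin k),
      (M.mulVec w) (Fin.castAdd l i)
        = ((M.submatrix (Fin.castAdd l) (Fin.castAdd l)).mulVec
            (fun a => w (Fin.castAdd l a))) i := by
    intro w i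
    simp only [Matrix.mulVec, dotProduct, Matrix.submatrix_apply]
    rw [← e.sum_comp (fun j => M (Fin.castAdd l i) j * w j), Fintype.sum_sum_type]
    simp [e, hz]
  have hFU : ∀ (w : Fin (k + l) → K[X]) (i : Fin k),
      ((F.submatrix (Fin.castAdd l) id).mulVec w) i = (F.mulVec w) (Fin.castAdd l i) := by
    intro w i
    simp [Matrix.mulVec, dotProduct]
  refine ⟨hG1, ?_, ?_, ?_⟩
  · -- columns of G₁ linearly independent
    apply rows_linearIndependent_of_det_ne_zero
    rwa [Matrix.det_transpose]
  · -- columns of G₁ are in the column module of F_U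
    intro q
    set w : Fin (k + l) → K[X] := fun j => Sum.elim q 0 (e.symm j) with hw
    refine ⟨U.mulVec w, ?_⟩
    funext i
    rw [hFU, Matrix.mulVec_mulVec, ← hM, htop]
    congr 1
    funext a
    simp [hw, e]
  · -- columns of F_U lie in the column module of G₁
    intro p
    have hUinv := Matrix.mul_nonsing_inv U hUunit
    set v := U⁻¹.mulVec p with hv
    refine ⟨fun a => v (Fin.castAdd l a), ?_⟩
    have hp : p = U.mulVec v := by
      rw [hv, Matrix.mulVec_mulVec, hUinv, Matrix.one_mulVec]
    funext i
    rw [hFU, hp, Matrix.mulVec_mulVec, ← hM, htop]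
end
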